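/- Assume μ < −1 and μλ + μ + λ > 0 (so also λ < 0). Then H_{μλ} has no even eigenvalue in (2, +∞); moreover, if z_μ < 0 is an even eigenvalue of H_{μ0} and z_λ < 0 is an even eigenvalue of H_{0λ}, then there exist even eigenvalues ζ₁ and ζ₂ of H_{μλ} such that ζ₁ < min(z_μ, z_λ) ≤ max(z_μ, z_λ) < ζ₂ < 0. -/

import Mathlib

open MeasureTheory Real Filter Topology
open scoped ENNReal

/-- The potential `v(0) = μ`, `v(±1) = λ/2`, `v(x) = 0` for `|x| > 1`. -/
noncomputable def pot (μ lam : ℝ) (x : ℤ) : ℝ :=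
  if x = 0 then μ else if x = 1 ∨ x = -1 then lam / 2 else 0

/-- A real number `z` is an *even eigenvalue* of the discrete Schrödinger operator
`H_{μλ}` on `ℓ²(ℤ; ℂ)`, `(H_{μλ}ψ)(x) = ψ(x) − (ψ(x+1) + ψ(x−1))/2 + v(x)ψ(x)`,
if there is a nonzero even `ψ ∈ ℓ²(ℤ; ℂ)` with `H_{μλ}ψ = zψ`. -/
def IsEvenEigenvalue (μ lam z : ℝ) : Prop :=
  ∃ ψ : lp (fun _ : ℤ => ℂ) 2, ψ ≠ 0 ∧ (∀ x : ℤ, ψ (-x) = ψ x) ∧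
    ∀ x : ℤ, ψ x - (ψ (x + 1) + ψ (x - 1)) / 2 + (pot μ lam x : ℂ) * ψ x = (z : ℂ) * ψ x

/-- Region `G_{20}`: if `μ < −1` and `μλ + μ + λ > 0`, then `H_{μλ}` has no even
eigenvalue in `(2, +∞)`; moreover, if `z_μ < 0` is an even eigenvalue of `H_{μ0}` and
`z_λ < 0` is an even eigenvalue of `H_{0λ}`, then there exist even eigenvalues `ζ₁, ζ₂`
of `H_{μλ}` with `ζ₁ < min(z_μ, z_λ) ≤ max(z_μ, z_λ) < ζ₂ < 0`. -/
noncomputable def Gfun (μ lam r : ℝ) : ℝ := (r^2 + 2*μ*r + 1) * (lam*r + 1) - 2*r^2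

noncomputable def zfun (r : ℝ) : ℝ := 1 - (r + 1/r)/2

lemma shift_tendsto (ψ : lp (fun _ : ℤ => ℂ) 2) (k : ℤ) :
    Tendsto (fun n : ℕ => (ψ : ∀ _ : ℤ, ℂ) ((n : ℤ) + k)) atTop (𝓝 0) := by
  have h2 : (0:ℝ) < (2 : ℝ≥0∞).toReal := by norm_num
  have hsum : Summable fun i : ℤ => ‖(ψ : ∀ _ : ℤ, ℂ) i‖ ^ (2 : ℝ≥0∞).toReal :=
    ψ.2.summable h2
  have hsum2 : Summable fun i : ℤ => ‖(ψ : ∀ _ : ℤ, ℂ) i‖ ^ (2:ℕ) := by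
    convert hsum using 2 with i
    rw [show ((2:ℝ≥0∞).toReal) = ((2:ℕ):ℝ) by norm_num, Real.rpow_natCast]
  have h0 : Tendsto (fun i : ℤ => ‖(ψ : ∀ _ : ℤ, ℂ) i‖ ^ (2:ℕ)) cofinite (𝓝 0) :=
    hsum2.tendsto_cofinite_zero
  have hn : Tendsto (fun i : ℤ => ‖(ψ : ∀ _ : ℤ, ℂ) i‖) cofinite (𝓝 0) := by
    have := (Real.continuous_sqrt.tendsto 0).comp h0
    simpa [Function.comp_def, Real.sqrt_sq (norm_nonneg _)] using this
  have hcf : Tendsto (fun i : ℤ => (ψ : ∀ _ : ℤ, ℂ) i) cofinite (𝓝 0) :=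
    tendsto_zero_iff_norm_tendsto_zero.mpr hn
  have hmap : Tendsto (fun n : ℕ => ((n : ℤ) + k)) atTop cofinite := by
    rw [← Nat.cofinite_eq_atTop]
    exact Function.Injective.tendsto_cofinite (fun a b hab => by omega)
  exact hcf.comp hmap

lemma forward {μ lam z r : ℝ} (hr0 : r ≠ 0) (hr1 : |r| < 1)
    (hrz : r^2 + 1 = 2*(1-z)*r) (hz : IsEvenEigenvalue μ lam z) :
    Gfun μ lam r = 0 := by
  obtain ⟨ψ, hne, heven, heq⟩ := hz
  set f : ℤ → ℂ := (ψ : ∀ _ : ℤ, ℂ) with hfdef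
  have hr0' : (r : ℂ) ≠ 0 := by exact_mod_cast hr0
  have hc : ((r:ℂ)^2 + 1) = 2*(1-(z:ℂ))*(r:ℂ) := by exact_mod_cast hrz
  -- recurrence for x ≥ 2
  have hrec : ∀ x : ℤ, 2 ≤ x → (r:ℂ) * f (x+1) = ((r:ℂ)^2+1) * f x - (r:ℂ) * f (x-1) := by
    intro x hx
    have hp : pot μ lam x = 0 := by
      unfold pot
      rw [if_neg (by omega), if_neg (by omega)]
    have hq := heq x
    rw [hp] at hq
    push_cast at hq
    linear_combination (-2*(r:ℂ)) * hq - f x * hc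
  set a : ℕ → ℂ := fun n => f ((n:ℤ)+2) - (r:ℂ) * f ((n:ℤ)+1) with hadef
  have hstep : ∀ n : ℕ, (r:ℂ) * a (n+1) = a n := by
    intro n
    have h1 := hrec ((n:ℤ)+2) (by omega)
    have e1 : ((n:ℤ)+2+1) = ((n+1:ℕ):ℤ)+2 := by push_cast; ring
    have e2 : ((n:ℤ)+2-1) = ((n:ℤ)+1) := by ring
    have e3 : ((n:ℤ)+2) = ((n+1:ℕ):ℤ)+1 := by push_cast; ring
    rw [e1, e2] at h1
    simp only [hadef]
    rw [← e3] at *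
    linear_combination h1
  have hgeo : ∀ n : ℕ, (r:ℂ)^n * a n = a 0 := by
    intro n
    induction n with
    | zero => simp
    | succ m ih => rw [pow_succ]; calc (r:ℂ)^m * (r:ℂ) * a (m+1) = (r:ℂ)^m * ((r:ℂ) * a (m+1)) := by ring
                   _ = (r:ℂ)^m * a m := by rw [hstep m]
                   _ = a 0 := ih
  have htend : Tendsto a atTop (𝓝 0) := by
    have h1 := shift_tendsto ψ 2
    have h2 := (shift_tendsto ψ 1).const_mul (r:ℂ)
    have := h1.sub h2
    simpa using this
  have ha0 : a 0 = 0 := by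
    by_contra h0
    have hle : ∀ n : ℕ, ‖a 0‖ ≤ ‖a n‖ := by
      intro n
      have := congrArg norm (hgeo n)
      rw [norm_mul, norm_pow, Complex.norm_real] at this
      calc ‖a 0‖ = ‖r‖^n * ‖a n‖ := this.symm
        _ ≤ 1 * ‖a n‖ := by
            apply mul_le_mul_of_nonneg_right _ (norm_nonneg _)
            exact pow_le_one₀ (norm_nonneg _) (le_of_lt hr1)
        _ = ‖a n‖ := one_mul _
    have hn0 : 0 < ‖a 0‖ := norm_pos_iff.mpr h0
    have hlim := htend.norm
    rw [norm_zero] at hlim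
    obtain ⟨n, hn⟩ := (hlim.eventually_lt_const hn0).exists
    exact absurd (hle n) (not_le.mpr hn)
  have hzero : ∀ n : ℕ, a n = 0 := by
    intro n
    have := hgeo n
    rw [ha0] at this
    exact (mul_eq_zero.mp this).resolve_left (pow_ne_zero n hr0')
  have hpow : ∀ n : ℕ, f ((n:ℤ)+1) = (r:ℂ)^n * f 1 := by
    intro n
    induction n with
    | zero => simp
    | succ m ih =>
      have := hzero m
      simp only [hadef, sub_eq_zero] at this
      have e1 : ((m:ℤ)+2) = (((m+1:ℕ)):ℤ)+1 := by push_cast; ring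
      rw [e1] at this
      rw [this, ih, pow_succ]; ring
  have hf1 : f 1 ≠ 0 := by
    intro hf1
    apply hne
    have hallpos : ∀ x : ℤ, 1 ≤ x → f x = 0 := by
      intro x hx
      have hx' : x = ((x-1).toNat : ℤ) + 1 := by omega
      rw [hx', hpow, hf1, mul_zero]
    have hall : ∀ x : ℤ, f x = 0 := by
      intro x
      rcases lt_trichotomy x 0 with hlt | rfl | hgt
      · rw [← heven x]; exact hallpos (-x) (by omega)
      · have hq := heq 1
        have h2 : f (1+1) = 0 := hallpos 2 (by omega)
        have h1 : f 1 = 0 := hf1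
        have h0 : f (1-1) = f 0 := by norm_num
        rw [h0] at hq
        rw [h1, h2] at hq
        simp at hq
        simpa using hq
      · exact hallpos x hgt
    rw [lp.eq_zero_iff_coeFn_eq_zero]
    funext x
    exact hall x
  -- the two boundary equations
  have e0 := heq 0
  have e1 := heq 1
  have hp0 : pot μ lam 0 = μ := by unfold pot; rw [if_pos rfl]
  have hp1 : pot μ lam 1 = lam/2 := by unfold pot; rw [if_neg (by omega), if_pos (by omega)]
  rw [hp0] at e0
  rw [hp1] at e1
  have hm1 : f (0-1) = f 1 := by
    have := heven 1; norm_num at this ⊢; exact this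
  have hf2 : f (1+1) = (r:ℂ) * f 1 := by
    have h := hpow 1
    norm_num at h ⊢
    exact h
  rw [hm1] at e0
  rw [hf2] at e1
  have h01 : f (0+1) = f 1 := by norm_num
  have h10 : f (1-1) = f 0 := by norm_num
  rw [h01] at e0
  rw [h10] at e1
  push_cast at e0 e1
  have key : ((Gfun μ lam r : ℝ) : ℂ) * f 1 = 0 := by
    simp only [Gfun]
    push_cast
    linear_combination (2*(r:ℂ)^2) * e0 + (4*(r:ℂ)^2*(1+(μ:ℂ)-(z:ℂ))) * e1 +
      (((lam:ℂ)*r + 1 + 2*(μ:ℂ)*r + 2*(1-(z:ℂ))*r) * f 1) * hc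
  rcases mul_eq_zero.mp key with hk | hk
  · exact_mod_cast hk
  · exact absurd hk hf1

lemma backward {μ lam r : ℝ} (hr0 : 0 < r) (hr1 : r < 1) (hG : Gfun μ lam r = 0) :
    IsEvenEigenvalue μ lam (zfun r) := by
  have hrne : r ≠ 0 := ne_of_gt hr0
  have hrne' : (r:ℂ) ≠ 0 := by exact_mod_cast hrne
  set f : ℤ → ℂ := fun x => if x = 0 then ((lam*r+1 : ℝ):ℂ) else ((r:ℂ))^x.natAbs with hfdef
  -- membership
  have hmem : Memℓp f 2 := by
    apply memℓp_gen
    have key : Summable fun x : ℤ => ‖f x‖ ^ (2:ℕ) := by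
      have hgeo : Summable fun n : ℕ => ((lam*r+1)^2 + 1) * (r^2)^n := by
        apply Summable.mul_left
        exact summable_geometric_of_lt_one (by positivity) (by nlinarith)
      have hsub : Summable fun x : ℤ => ((lam*r+1)^2 + 1) * (r^2)^x.natAbs := by
        apply Summable.of_nat_of_neg
        · simpa using hgeo
        · simpa [Int.natAbs_neg] using hgeo
      apply Summable.of_nonneg_of_le (fun x => by positivity) _ hsub
      intro x
      by_cases hx : x = 0
      · subst hx
        simp only [hfdef, if_pos rfl]
        rw [Complex.norm_real, Real.norm_eq_abs]
        simp only [Int.natAbs_zero, pow_zero, mul_one]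
        nlinarith [sq_abs (lam*r+1), sq_nonneg (lam*r+1)]
      · simp only [hfdef, if_neg hx]
        rw [norm_pow, Complex.norm_real, Real.norm_eq_abs, abs_of_pos hr0]
        have h1 : (r ^ x.natAbs)^2 = (r^2)^x.natAbs := by ring
        rw [← pow_mul, mul_comm x.natAbs 2, pow_mul]
        nlinarith [pow_nonneg (sq_nonneg r) x.natAbs, sq_nonneg (lam*r+1),
          pow_pos (by positivity : (0:ℝ) < r^2) x.natAbs]
    convert key using 2 with x
    rw [show ((2:ℝ≥0∞).toReal) = ((2:ℕ):ℝ) by norm_num, Real.rpow_natCast]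
  refine ⟨⟨f, hmem⟩, ?_, ?_, ?_⟩
  · intro h0
    rw [lp.eq_zero_iff_coeFn_eq_zero] at h0
    have := congrFun h0 1
    simp only [hfdef] at this
    norm_num at this
    exact hrne this
  · intro x
    show f (-x) = f x
    simp only [hfdef, neg_eq_zero, Int.natAbs_neg]
  · intro x
    show f x - (f (x+1) + f (x-1))/2 + ((pot μ lam x : ℝ):ℂ) * f x = ((zfun r : ℝ):ℂ) * f x
    have hzr : ((zfun r : ℝ):ℂ) * (r:ℂ) = (r:ℂ) - ((r:ℂ)^2+1)/2 := by
      have : zfun r * r = r - (r^2+1)/2 := by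
        unfold zfun; field_simp
      exact_mod_cast this
    have hGc : ((r:ℂ)^2 + 2*(μ:ℂ)*(r:ℂ) + 1) * ((lam:ℂ)*(r:ℂ) + 1) - 2*(r:ℂ)^2 = 0 := by
      have : ((Gfun μ lam r : ℝ) : ℂ) = 0 := by rw [hG]; norm_num
      simp only [Gfun] at this
      push_cast at this
      linear_combination this
    -- reduce to x ≥ 0 by symmetry
    have main : ∀ y : ℤ, 0 ≤ y →
        f y - (f (y+1) + f (y-1))/2 + ((pot μ lam y : ℝ):ℂ) * f y = ((zfun r : ℝ):ℂ) * f y := by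
      intro y hy
      rcases eq_or_lt_of_le hy with h0 | h1
      · -- y = 0
        subst h0
        have hv0 : f 0 = ((lam*r+1 : ℝ):ℂ) := by simp only [hfdef, if_pos rfl]
        have hv1 : f (0+1) = (r:ℂ) := by
          simp only [hfdef]
          rw [if_neg (by omega)]
          norm_num
        have hvm1 : f (0-1) = (r:ℂ) := by
          simp only [hfdef]
          rw [if_neg (by omega)]
          norm_num
        have hpot : pot μ lam 0 = μ := by unfold pot; rw [if_pos rfl]
        rw [hv0, hv1, hvm1, hpot]
        push_cast
        apply mul_left_cancel₀ (show (2*(r:ℂ)) ≠ 0 by simpa using hrne')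
        linear_combination hGc + (-2)*((lam:ℂ)*(r:ℂ)+1) * hzr
      rcases eq_or_lt_of_le (by omega : (1:ℤ) ≤ y) with h1' | h2
      · -- y = 1
        subst h1'
        have hv1 : f 1 = (r:ℂ) := by
          simp only [hfdef]; rw [if_neg (by omega)]; norm_num
        have hv2 : f (1+1) = (r:ℂ)^2 := by
          simp only [hfdef]; rw [if_neg (by omega)]; norm_num
        have hv0 : f (1-1) = ((lam*r+1 : ℝ):ℂ) := by
          simp only [hfdef]; norm_num
        have hpot : pot μ lam 1 = lam/2 := by
          unfold pot; rw [if_neg (by omega), if_pos (by omega)]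
        rw [hv1, hv2, hv0, hpot]
        push_cast
        linear_combination -hzr
      · -- y ≥ 2
        set m : ℕ := (y-2).toNat with hm
        have hym : y = (m:ℤ)+2 := by omega
        have hv : f y = (r:ℂ)^(m+2) := by
          simp only [hfdef]; rw [if_neg (by omega)]; congr 1; omega
        have hvp : f (y+1) = (r:ℂ)^(m+3) := by
          simp only [hfdef]; rw [if_neg (by omega)]; congr 1; omega
        have hvm : f (y-1) = (r:ℂ)^(m+1) := by
          simp only [hfdef]; rw [if_neg (by omega)]; congr 1; omega
        have hpot : pot μ lam y = 0 := by
          unfold pot; rw [if_neg (by omega), if_neg (by omega)]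
        rw [hv, hvp, hvm, hpot]
        push_cast
        linear_combination (-(r:ℂ)^(m+1)) * hzr
    rcases le_or_gt 0 x with hx | hx
    · exact main x hx
    · have hmx := main (-x) (by omega)
      have e1 : f (-x+1) = f (x-1) := by
        have : -x+1 = -(x-1) := by ring
        rw [this]
        simp only [hfdef, neg_eq_zero, Int.natAbs_neg]
      have e2 : f (-x-1) = f (x+1) := by
        have : -x-1 = -(x+1) := by ring
        rw [this]
        simp only [hfdef, neg_eq_zero, Int.natAbs_neg]
      have e3 : f (-x) = f x := by simp only [hfdef, neg_eq_zero, Int.natAbs_neg]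
      have e4 : pot μ lam (-x) = pot μ lam x := by
        unfold pot
        by_cases hx1 : x = -1
        · subst hx1; norm_num
        · rw [if_neg (by omega), if_neg (by omega), if_neg (by omega), if_neg (by omega)]
      rw [e1, e2, e3, e4] at hmx
      linear_combination hmx

lemma exists_r_neg {z : ℝ} (hz : z < 0) :
    ∃ r : ℝ, 0 < r ∧ r < 1 ∧ r^2 + 1 = 2*(1-z)*r := by
  set a : ℝ := 1 - z with ha
  have ha1 : 1 < a := by simp [ha]; linarith
  set s : ℝ := Real.sqrt (a^2 - 1) with hs
  have hs2 : s^2 = a^2 - 1 := Real.sq_sqrt (by nlinarith)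
  have hs0 : 0 ≤ s := Real.sqrt_nonneg _
  refine ⟨a - s, ?_, ?_, by nlinarith⟩
  · have : s < a := by nlinarith
    linarith
  · have : a - 1 < s := by
      rw [hs]
      rw [show a - 1 = Real.sqrt ((a-1)^2) from (Real.sqrt_sq (by linarith)).symm]
      apply Real.sqrt_lt_sqrt (by positivity)
      nlinarith
    linarith

lemma exists_r_pos {z : ℝ} (hz : 2 < z) :
    ∃ r : ℝ, -1 < r ∧ r < 0 ∧ r^2 + 1 = 2*(1-z)*r := by
  set a : ℝ := 1 - z with ha
  have ha1 : a < -1 := by simp [ha]; linarith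
  set s : ℝ := Real.sqrt (a^2 - 1) with hs
  have hs2 : s^2 = a^2 - 1 := Real.sq_sqrt (by nlinarith)
  have hs0 : 0 ≤ s := Real.sqrt_nonneg _
  refine ⟨a + s, ?_, ?_, by nlinarith⟩
  · have : -1 - a < s := by
      rw [hs]
      rw [show -1 - a = Real.sqrt ((-1-a)^2) from (Real.sqrt_sq (by linarith)).symm]
      apply Real.sqrt_lt_sqrt (by positivity)
      nlinarith
    linarith
  · have : s < -a := by nlinarith
    linarith

lemma zfun_eq {z r : ℝ} (hr : r ≠ 0) (hrz : r^2 + 1 = 2*(1-z)*r) : zfun r = z := by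
  unfold zfun
  field_simp
  linear_combination -hrz

lemma zfun_lt {r1 r2 : ℝ} (h0 : 0 < r1) (h12 : r1 < r2) (h21 : r2 ≤ 1) :
    zfun r1 < zfun r2 := by
  have h2 : 0 < r2 := lt_trans h0 h12
  have e : (r1 + 1/r1) - (r2 + 1/r2) = (r2 - r1)*(1 - r1*r2)/(r1*r2) := by
    field_simp; ring
  have hx : 0 < (r2 - r1)*(1 - r1*r2)/(r1*r2) := by
    apply div_pos (mul_pos (by linarith) (by nlinarith)) (mul_pos h0 h2)
  unfold zfun
  rw [← e] at hx
  linarith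

theorem region_G20 (μ lam : ℝ) (hμ : μ < -1) (h : 0 < μ * lam + μ + lam) :
    (∀ z : ℝ, 2 < z → ¬ IsEvenEigenvalue μ lam z) ∧
    ∀ zμ zlam : ℝ, zμ < 0 → IsEvenEigenvalue μ 0 zμ →
      zlam < 0 → IsEvenEigenvalue 0 lam zlam →
      ∃ ζ₁ ζ₂ : ℝ, IsEvenEigenvalue μ lam ζ₁ ∧ IsEvenEigenvalue μ lam ζ₂ ∧
        ζ₁ < min zμ zlam ∧ max zμ zlam < ζ₂ ∧ ζ₂ < 0 := by
  have hlam : lam < 0 := by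
    by_contra hc
    push_neg at hc
    nlinarith [mul_nonneg hc (show (0:ℝ) ≤ -1-μ by linarith)]
  constructor
  · intro z hz hev
    obtain ⟨ρ, hρ1, hρ0, hρz⟩ := exists_r_pos hz
    have hG := forward (ne_of_lt hρ0) (abs_lt.mpr ⟨hρ1, by linarith⟩) hρz hev
    have hA : 0 < ρ^2+2*μ*ρ+1 := by
      nlinarith [mul_pos_of_neg_of_neg (show μ+1 < 0 by linarith) hρ0, sq_nonneg (1-ρ)]
    have hkey : 0 < Gfun μ lam ρ := by
      simp only [Gfun]
      nlinarith [mul_pos hA (mul_pos_of_neg_of_neg hlam hρ0),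
        mul_pos_of_neg_of_neg (show μ+1 < 0 by linarith) hρ0,
        mul_pos (show 0 < ρ+1 by linarith) (show 0 < -ρ by linarith)]
    rw [hG] at hkey
    exact lt_irrefl 0 hkey
  · intro zμ zlam hzμ hevμ hzlam hevlam
    obtain ⟨rμ, hrμ0, hrμ1, hrμz⟩ := exists_r_neg hzμ
    obtain ⟨rl, hrl0, hrl1, hrlz⟩ := exists_r_neg hzlam
    have hGμ0 : Gfun μ 0 rμ = 0 :=
      forward (ne_of_gt hrμ0) (by rw [abs_of_pos hrμ0]; exact hrμ1) hrμz hevμ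
    have hGl0 : Gfun 0 lam rl = 0 :=
      forward (ne_of_gt hrl0) (by rw [abs_of_pos hrl0]; exact hrl1) hrlz hevlam
    have hzμe : zfun rμ = zμ := zfun_eq (ne_of_gt hrμ0) hrμz
    have hzle : zfun rl = zlam := zfun_eq (ne_of_gt hrl0) hrlz
    have hEμ : rμ^2 + 2*μ*rμ + 1 = 2*rμ^2 := by
      have := hGμ0; simp only [Gfun] at this; linear_combination this
    have hGμ : Gfun μ lam rμ < 0 := by
      have he : Gfun μ lam rμ = 2*lam*rμ^3 := by
        simp only [Gfun]; linear_combination (lam*rμ+1) * hEμ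
      rw [he]; nlinarith [pow_pos hrμ0 3]
    have hEl : (rl^2+1)*(lam*rl+1) = 2*rl^2 := by
      have := hGl0; simp only [Gfun] at this; linear_combination this
    have hposl : 0 < lam*rl + 1 := by
      by_contra hc
      push_neg at hc
      nlinarith [mul_nonneg (by positivity : (0:ℝ) ≤ rl^2+1)
        (by linarith : 0 ≤ -(lam*rl+1)), pow_pos hrl0 2]
    have hGl : Gfun μ lam rl < 0 := by
      have he : Gfun μ lam rl = 2*μ*rl*(lam*rl+1) := by
        simp only [Gfun]; linear_combination hEl
      rw [he]
      nlinarith [mul_pos hrl0 hposl]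
    set rmin := min rμ rl with hrmin
    set rmax := max rμ rl with hrmax
    have hminpos : 0 < rmin := lt_min hrμ0 hrl0
    have hmax1 : rmax < 1 := max_lt hrμ1 hrl1
    have hGmin : Gfun μ lam rmin < 0 := by
      rcases min_choice rμ rl with hh | hh <;> rw [hrmin, hh] <;> assumption
    have hGmax : Gfun μ lam rmax < 0 := by
      rcases max_choice rμ rl with hh | hh <;> rw [hrmax, hh] <;> assumption
    have hcont : Continuous (Gfun μ lam) := by
      unfold Gfun; fun_prop
    have hG0 : Gfun μ lam 0 = 1 := by simp [Gfun]
    have hG1 : 0 < Gfun μ lam 1 := by simp only [Gfun]; nlinarith [h]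
    have hIoo1 : (0:ℝ) ∈ Set.Ioo (Gfun μ lam rmin) (Gfun μ lam 0) :=
      ⟨hGmin, by rw [hG0]; norm_num⟩
    obtain ⟨ρ₁, hρ₁mem, hρ₁⟩ :=
      intermediate_value_Ioo' (le_of_lt hminpos) hcont.continuousOn hIoo1
    have hIoo2 : (0:ℝ) ∈ Set.Ioo (Gfun μ lam rmax) (Gfun μ lam 1) := ⟨hGmax, hG1⟩
    obtain ⟨ρ₂, hρ₂mem, hρ₂⟩ :=
      intermediate_value_Ioo (le_of_lt hmax1) hcont.continuousOn hIoo2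
    have hρ₁0 : 0 < ρ₁ := hρ₁mem.1
    have hρ₁min : ρ₁ < rmin := hρ₁mem.2
    have hρ₂max : rmax < ρ₂ := hρ₂mem.1
    have hρ₂1 : ρ₂ < 1 := hρ₂mem.2
    have hρ₂0 : 0 < ρ₂ := lt_trans (lt_of_lt_of_le hminpos (min_le_max)) hρ₂max
    have hρ₁1 : ρ₁ < 1 := lt_trans hρ₁min (lt_of_le_of_lt min_le_max hmax1)
    refine ⟨zfun ρ₁, zfun ρ₂, backward hρ₁0 hρ₁1 hρ₁, backward hρ₂0 hρ₂1 hρ₂, ?_, ?_, ?_⟩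
    · apply lt_min
      · rw [← hzμe]
        exact zfun_lt hρ₁0 (lt_of_lt_of_le hρ₁min (min_le_left _ _)) (le_of_lt hrμ1)
      · rw [← hzle]
        exact zfun_lt hρ₁0 (lt_of_lt_of_le hρ₁min (min_le_right _ _)) (le_of_lt hrl1)
    · apply max_lt
      · rw [← hzμe]
        exact zfun_lt hrμ0 (lt_of_le_of_lt (le_max_left _ _) hρ₂max) (le_of_lt hρ₂1)
      · rw [← hzle]
        exact zfun_lt hrl0 (lt_of_le_of_lt (le_max_right _ _) hρ₂max) (le_of_lt hρ₂1)
    · have := zfun_lt hρ₂0 hρ₂1 le_rfl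
      have h1 : zfun 1 = 0 := by norm_num [zfun]
      linarith [h1 ▸ this]
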